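/- arXiv:1504.00618 — 4 statements merged into one kernel-verified Lean document; each statement's English description precedes it below -/
import Mathlib

section
/- For every γ ∈ (0, 1/2) there exists a finite constant C' > 0 such that for every integer n ≥ 1, the iterated integral ∫₀¹ du₀ ∫₀¹ du₁ ⋯ ∫₀¹ duₙ ∏_{k=1}^n 1/((u_{k-1} ∧ u_k)^γ · (u_{k-1} ∨ u_k)^{1-γ}) is at most C'^n. -/
open MeasureTheory Set
open scoped ENNReal

noncomputable section AuxTI
namespace AuxTI

/-- The reference measure: Lebesgue restricted to `(0,1]`. -/
def μ1 : Measure ℝ := volume.restrict (Ioc (0:ℝ) 1)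

instance : IsFiniteMeasure μ1 := by
  constructor
  rw [μ1, Measure.restrict_apply_univ]
  simp [Real.volume_Ioc]

/-- The kernel. -/
def Kf (γ u v : ℝ) : ℝ≥0∞ :=
  ENNReal.ofReal (1 / (min u v ^ γ * max u v ^ (1-γ)))

/-- The weight. -/
def g (v : ℝ) : ℝ≥0∞ := ENNReal.ofReal (v ^ (-(1/2) : ℝ))

lemma measurable_F (γ : ℝ) (n : ℕ) :
    Measurable fun u : Fin (n+1) → ℝ =>
      (∏ k : Fin n, Kf γ (u k.castSucc) (u k.succ)) * g (u (Fin.last n)) := by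
  unfold Kf g
  fun_prop

lemma restrict_pi (n : ℕ) :
    (volume : Measure (Fin n → ℝ)).restrict (Set.univ.pi fun _ => Ioc (0:ℝ) 1)
      = Measure.pi (fun _ : Fin n => μ1) := by
  rw [volume_pi]
  refine (Measure.pi_eq fun s hs => ?_).symm
  rw [Measure.restrict_apply (MeasurableSet.univ_pi hs), ← Set.pi_inter_distrib,
    Measure.pi_pi]
  simp [μ1, Measure.restrict_apply (hs _)]

lemma lint_rpow_Ioc_zero {u r : ℝ} (hu : 0 < u) (hr : -1 < r) :
    ∫⁻ v in Ioc (0:ℝ) u, ENNReal.ofReal (v ^ r) = ENNReal.ofReal (u ^ (r+1) / (r+1)) := by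
  have hint : IntegrableOn (fun v : ℝ => v ^ r) (Ioc 0 u) := by
    rw [← intervalIntegrable_iff_integrableOn_Ioc_of_le hu.le]
    exact intervalIntegral.intervalIntegrable_rpow' hr
  rw [← ofReal_integral_eq_lintegral_ofReal hint
    (ae_restrict_of_forall_mem measurableSet_Ioc fun v hv => Real.rpow_nonneg hv.1.le r)]
  congr 1
  rw [← intervalIntegral.integral_of_le hu.le, integral_rpow (Or.inl hr),
    Real.zero_rpow (by linarith), sub_zero]

lemma lint_rpow_Ioc_one {u r : ℝ} (hu : 0 < u) (hu1 : u ≤ 1) (hr : r < -1) :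
    ∫⁻ v in Ioc u 1, ENNReal.ofReal (v ^ r) ≤ ENNReal.ofReal (u ^ (r+1) / (-(r+1))) := by
  have h0 : (0:ℝ) ∉ uIcc u 1 := by
    rw [Set.uIcc_of_le hu1]
    intro h
    exact absurd h.1 (not_le.mpr hu)
  have hint : IntegrableOn (fun v : ℝ => v ^ r) (Ioc u 1) := by
    rw [← intervalIntegrable_iff_integrableOn_Ioc_of_le hu1]
    exact intervalIntegral.intervalIntegrable_rpow (Or.inr h0)
  rw [← ofReal_integral_eq_lintegral_ofReal hint
    (ae_restrict_of_forall_mem measurableSet_Ioc fun v hv =>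
      Real.rpow_nonneg (le_trans hu.le hv.1.le) r)]
  apply ENNReal.ofReal_le_ofReal
  rw [← intervalIntegral.integral_of_le hu1, integral_rpow (Or.inr ⟨by linarith, h0⟩),
    Real.one_rpow]
  have h1 : 0 < -(r+1) := by linarith
  have hEq : ((1:ℝ) - u^(r+1))/(r+1) = (u^(r+1) - 1)/(-(r+1)) := by
    rw [div_neg, ← neg_div, neg_sub]
  rw [hEq]
  gcongr
  linarith

lemma claimA {γ : ℝ} (hγ0 : 0 < γ) (hγ : γ < 1/2) {u : ℝ} (hu : u ∈ Ioc (0:ℝ) 1) :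
    ∫⁻ v, Kf γ u v * g v ∂μ1 ≤ ENNReal.ofReal (2/(1/2-γ)) * g u := by
  obtain ⟨hu0, hu1⟩ := hu
  have hhalf : (0:ℝ) < 1/2 - γ := by linarith
  have hsplit : ∫⁻ v, Kf γ u v * g v ∂μ1
      = (∫⁻ v in Ioc (0:ℝ) u, Kf γ u v * g v) + ∫⁻ v in Ioc u 1, Kf γ u v * g v := by
    rw [μ1, ← lintegral_union measurableSet_Ioc (Set.Ioc_disjoint_Ioc_of_le le_rfl),
      Set.Ioc_union_Ioc_eq_Ioc hu0.le hu1]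
  rw [hsplit]
  have key : ENNReal.ofReal (2/(1/2-γ)) * g u
      = ENNReal.ofReal (1/(1/2-γ)) * g u + ENNReal.ofReal (1/(1/2-γ)) * g u := by
    rw [← add_mul, ← ENNReal.ofReal_add (by positivity) (by positivity)]
    congr 2
    rw [div_eq_mul_inv, one_div]
    ring
  rw [key]
  refine add_le_add ?_ ?_
  · -- piece on `Ioc 0 u` : here `min u v = v`, `max u v = u`.
    have e1 : ∀ v ∈ Ioc (0:ℝ) u, Kf γ u v * g v
        = ENNReal.ofReal (u ^ (γ-1)) * ENNReal.ofReal (v ^ (-(γ + 1/2))) := by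
      intro v hv
      have hv0 : 0 < v := hv.1
      unfold Kf g
      rw [min_eq_right hv.2, max_eq_left hv.2,
        ← ENNReal.ofReal_mul (by positivity), ← ENNReal.ofReal_mul (by positivity)]
      congr 1
      have h1 : v ^ (-(γ + 1/2)) = (v ^ γ)⁻¹ * v ^ (-(1/2) : ℝ) := by
        rw [← Real.rpow_neg hv0.le, ← Real.rpow_add hv0]
        congr 1; ring
      have h2 : u ^ (γ - 1) = (u ^ (1 - γ))⁻¹ := by
        rw [← Real.rpow_neg hu0.le]
        congr 1; ring
      rw [h1, h2, one_div, mul_inv]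
      ring
    rw [setLIntegral_congr_fun_ae measurableSet_Ioc (ae_of_all _ e1),
      lintegral_const_mul' _ _ ENNReal.ofReal_ne_top,
      lint_rpow_Ioc_zero hu0 (by linarith)]
    apply le_of_eq
    rw [show -(γ + 1/2) + 1 = 1/2 - γ by ring,
      ← ENNReal.ofReal_mul (by positivity), g, ← ENNReal.ofReal_mul (by positivity)]
    congr 1
    have hpow : u^(γ-1) * u^(1/2-γ) = u^(-(1/2):ℝ) := by
      rw [← Real.rpow_add hu0]; congr 1; ring
    rw [div_eq_mul_inv, ← mul_assoc, hpow, one_div]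
    ring
  · -- piece on `Ioc u 1` : here `min u v = u`, `max u v = v`.
    have e2 : ∀ v ∈ Ioc u 1, Kf γ u v * g v
        = ENNReal.ofReal (u ^ (-γ)) * ENNReal.ofReal (v ^ (γ - 3/2)) := by
      intro v hv
      have hv0 : 0 < v := lt_of_lt_of_le hu0 hv.1.le
      unfold Kf g
      rw [min_eq_left hv.1.le, max_eq_right hv.1.le,
        ← ENNReal.ofReal_mul (by positivity), ← ENNReal.ofReal_mul (by positivity)]
      congr 1
      have h1 : v ^ (γ - 3/2) = (v ^ (1 - γ))⁻¹ * v ^ (-(1/2) : ℝ) := by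
        rw [← Real.rpow_neg hv0.le, ← Real.rpow_add hv0]
        congr 1; ring
      have h2 : u ^ (-γ) = (u ^ γ)⁻¹ := Real.rpow_neg hu0.le γ
      rw [h1, h2, one_div, mul_inv]
      ring
    rw [setLIntegral_congr_fun_ae measurableSet_Ioc (ae_of_all _ e2),
      lintegral_const_mul' _ _ ENNReal.ofReal_ne_top]
    refine le_trans (mul_le_mul_right (lint_rpow_Ioc_one hu0 hu1 (by linarith)) _) ?_
    apply le_of_eq
    rw [show γ - 3/2 + 1 = γ - 1/2 by ring,
      ← ENNReal.ofReal_mul (by positivity), g, ← ENNReal.ofReal_mul (by positivity)]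
    congr 1
    have hpow : u^(-γ) * u^(γ-1/2) = u^(-(1/2):ℝ) := by
      rw [← Real.rpow_add hu0]; congr 1; ring
    rw [show -(γ - 1/2) = 1/2 - γ by ring, div_eq_mul_inv, ← mul_assoc, hpow, one_div]
    ring

/-- The weighted iterated integral. -/
def J (γ : ℝ) (n : ℕ) : ℝ≥0∞ :=
  ∫⁻ u, (∏ k : Fin n, Kf γ (u k.castSucc) (u k.succ)) * g (u (Fin.last n))
    ∂(Measure.pi fun _ : Fin (n+1) => μ1)

lemma ae_last_mem (n : ℕ) :
    ∀ᵐ y ∂(Measure.pi fun _ : Fin (n+1) => μ1), y (Fin.last n) ∈ Ioc (0:ℝ) 1 := by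
  rw [ae_iff]
  have h0 : μ1 ((Ioc (0:ℝ) 1)ᶜ) = 0 := by
    rw [μ1, Measure.restrict_apply measurableSet_Ioc.compl]
    simp
  exact Measure.pi_eval_preimage_null (μ := fun _ : Fin (n+1) => μ1) h0

lemma J_zero (γ : ℝ) : J γ 0 = ENNReal.ofReal 2 := by
  rw [J]
  simp only [Finset.univ_eq_empty, Finset.prod_empty, one_mul]
  have h := (measurePreserving_funUnique μ1 (Fin 1)).lintegral_comp_emb
    (MeasurableEquiv.funUnique (Fin 1) ℝ).measurableEmbedding g
  have heq : ∀ u : Fin 1 → ℝ, g ((MeasurableEquiv.funUnique (Fin 1) ℝ) u) = g (u (Fin.last 0)) :=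
    fun u => rfl
  simp only [heq] at h
  refine Eq.trans h ?_
  rw [μ1]
  simp only [g]
  rw [lint_rpow_Ioc_zero one_pos (by norm_num)]
  norm_num

lemma J_succ {γ : ℝ} (hγ0 : 0 < γ) (hγ : γ < 1/2) (n : ℕ) :
    J γ (n+1) ≤ ENNReal.ofReal (2/(1/2-γ)) * J γ n := by
  set e := MeasurableEquiv.piFinSuccAbove (fun _ : Fin (n+2) => ℝ) (Fin.last (n+1)) with he
  have hmp := measurePreserving_piFinSuccAbove (fun _ : Fin (n+2) => μ1) (Fin.last (n+1))
  have hsymm := hmp.symm e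
  rw [J, ← hsymm.lintegral_comp_emb e.symm.measurableEmbedding]
  have hsa : ∀ x (y : Fin (n+1) → ℝ), e.symm (x, y) = Fin.snoc y x := by
    intro x y
    simp [he, MeasurableEquiv.piFinSuccAbove, Fin.insertNth_last', Fin.snocEquiv]
  have hFs : ∀ x (y : Fin (n+1) → ℝ),
      (∏ k : Fin (n+1), Kf γ (e.symm (x,y) k.castSucc) (e.symm (x,y) k.succ))
        * g (e.symm (x,y) (Fin.last (n+1)))
      = (∏ j : Fin n, Kf γ (y j.castSucc) (y j.succ))
          * (Kf γ (y (Fin.last n)) x * g x) := by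
    intro x y
    rw [hsa]
    rw [Fin.prod_univ_castSucc]
    simp only [Fin.snoc_last, Fin.succ_last, Fin.succ_castSucc, Fin.snoc_castSucc]
    ring
  rw [lintegral_prod_symm
    (fun a : ℝ × (Fin (n+1) → ℝ) =>
      (∏ k : Fin (n+1), Kf γ (e.symm a k.castSucc) (e.symm a k.succ))
        * g (e.symm a (Fin.last (n+1))))
    ((measurable_F γ (n+1)).comp e.symm.measurable).aemeasurable]
  simp only [hFs]
  calc
    ∫⁻ y, ∫⁻ x, (∏ j : Fin n, Kf γ (y j.castSucc) (y j.succ))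
        * (Kf γ (y (Fin.last n)) x * g x) ∂μ1 ∂(Measure.pi fun _ : Fin (n+1) => μ1)
      ≤ ∫⁻ y, ENNReal.ofReal (2/(1/2-γ)) * ((∏ j : Fin n, Kf γ (y j.castSucc) (y j.succ))
        * g (y (Fin.last n))) ∂(Measure.pi fun _ : Fin (n+1) => μ1) := by
        refine lintegral_mono_ae ((ae_last_mem n).mono fun y hy => ?_)
        have hfin : (∏ j : Fin n, Kf γ (y j.castSucc) (y j.succ)) ≠ ∞ := by
          refine (ENNReal.prod_lt_top fun j _ => ?_).ne
          exact ENNReal.ofReal_lt_top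
        rw [lintegral_const_mul' _ _ hfin]
        calc (∏ j : Fin n, Kf γ (y j.castSucc) (y j.succ))
              * ∫⁻ x, Kf γ (y (Fin.last n)) x * g x ∂μ1
            ≤ (∏ j : Fin n, Kf γ (y j.castSucc) (y j.succ))
              * (ENNReal.ofReal (2/(1/2-γ)) * g (y (Fin.last n))) :=
              mul_le_mul_right (claimA hγ0 hγ hy) _
          _ = ENNReal.ofReal (2/(1/2-γ)) * ((∏ j : Fin n, Kf γ (y j.castSucc) (y j.succ))
              * g (y (Fin.last n))) := by ring
    _ = ENNReal.ofReal (2/(1/2-γ)) * J γ n := by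
        rw [lintegral_const_mul' _ _ ENNReal.ofReal_ne_top, J]

lemma J_le {γ : ℝ} (hγ0 : 0 < γ) (hγ : γ < 1/2) (n : ℕ) :
    J γ n ≤ ENNReal.ofReal (2/(1/2-γ)) ^ n * ENNReal.ofReal 2 := by
  induction n with
  | zero => rw [J_zero, pow_zero, one_mul]
  | succ n ih =>
    calc J γ (n+1) ≤ ENNReal.ofReal (2/(1/2-γ)) * J γ n := J_succ hγ0 hγ n
      _ ≤ ENNReal.ofReal (2/(1/2-γ)) * (ENNReal.ofReal (2/(1/2-γ)) ^ n * ENNReal.ofReal 2) :=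
          mul_le_mul_right ih _
      _ = ENNReal.ofReal (2/(1/2-γ)) ^ (n+1) * ENNReal.ofReal 2 := by ring

end AuxTI
end AuxTI

open AuxTI

/-- Lemma 6.2: if `γ < 1/2` the iterated time integral grows at most exponentially. -/
theorem stmt_0 (γ : ℝ) (hγ0 : 0 < γ) (hγ : γ < 1/2) :
    ∃ C' : ℝ, 0 < C' ∧ ∀ n : ℕ, 1 ≤ n →
      (∫⁻ u in Set.univ.pi (fun _ : Fin (n+1) => Set.Ioc (0:ℝ) 1),
        ∏ k : Fin n, ENNReal.ofReal
          (1 / ((min (u k.castSucc) (u k.succ)) ^ γ *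
                (max (u k.castSucc) (u k.succ)) ^ (1-γ)))) ≤
      ENNReal.ofReal (C' ^ n) := by
  have hhalf : (0:ℝ) < 1/2 - γ := by linarith
  refine ⟨4/(1/2-γ), by positivity, fun n hn => ?_⟩
  rw [restrict_pi (n+1)]
  show (∫⁻ u, (∏ k : Fin n, Kf γ (u k.castSucc) (u k.succ))
      ∂(Measure.pi fun _ : Fin (n+1) => μ1)) ≤ _
  have step1 : (∫⁻ u, (∏ k : Fin n, Kf γ (u k.castSucc) (u k.succ))
      ∂(Measure.pi fun _ : Fin (n+1) => μ1)) ≤ J γ n := by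
    refine lintegral_mono_ae ((ae_last_mem n).mono fun y hy => ?_)
    have h1 : (1:ℝ≥0∞) ≤ g (y (Fin.last n)) := by
      rw [show (1:ℝ≥0∞) = ENNReal.ofReal 1 by simp]
      exact ENNReal.ofReal_le_ofReal
        (Real.one_le_rpow_of_pos_of_le_one_of_nonpos hy.1 hy.2 (by norm_num))
    calc (∏ k : Fin n, Kf γ (y k.castSucc) (y k.succ))
        = (∏ k : Fin n, Kf γ (y k.castSucc) (y k.succ)) * 1 := (mul_one _).symm
      _ ≤ (∏ k : Fin n, Kf γ (y k.castSucc) (y k.succ)) * g (y (Fin.last n)) :=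
          mul_le_mul_right h1 _
  refine le_trans (le_trans step1 (J_le hγ0 hγ n)) ?_
  rw [← ENNReal.ofReal_pow (by positivity), ← ENNReal.ofReal_mul (by positivity)]
  apply ENNReal.ofReal_le_ofReal
  rw [show (4:ℝ)/(1/2-γ) = 2 * (2/(1/2-γ)) by ring, mul_pow]
  have h2 : (2:ℝ) ≤ 2^n := by
    calc (2:ℝ) = 2^1 := (pow_one 2).symm
      _ ≤ 2^n := pow_le_pow_right₀ one_le_two hn
  calc (2/(1/2-γ))^n * 2 = 2 * (2/(1/2-γ))^n := by ring
    _ ≤ 2^n * (2/(1/2-γ))^n :=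
        mul_le_mul_of_nonneg_right h2 (pow_nonneg (by positivity) n)
end

section
/- Let γ ∈ (0, 1/2) and let α be a real number with γ − 1 < α < −γ. Then for every v ∈ (0,1], ∫₀¹ u^α / ((u ∧ v)^γ · (u ∨ v)^{1-γ}) du ≤ C' · v^α, where C' = (1 + α − γ)^{-1} − (α + γ)^{-1}. -/
open MeasureTheory Set

/-- Induction step in the proof of Lemma 6.2. -/
theorem stmt_1 (γ α : ℝ) (hγ0 : 0 < γ) (hγ : γ < 1/2)
    (hα1 : γ - 1 < α) (hα2 : α < -γ) (v : ℝ) (hv : v ∈ Set.Ioc (0:ℝ) 1) :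
    (∫⁻ u in Set.Ioc (0:ℝ) 1,
        ENNReal.ofReal (u ^ α / ((min u v) ^ γ * (max u v) ^ (1-γ)))) ≤
      ENNReal.ofReal (((1 + α - γ)⁻¹ - (α + γ)⁻¹) * v ^ α) := by
  obtain ⟨hv0, hv1⟩ := hv
  have h1 : (0:ℝ) < α - γ + 1 := by linarith
  have h2 : α + γ < 0 := by linarith
  have hvy : (0:ℝ) < v ^ (-γ) := Real.rpow_pos_of_pos hv0 _
  have hva : (0:ℝ) < v ^ α := Real.rpow_pos_of_pos hv0 _
  -- split the domain
  rw [show Set.Ioc (0:ℝ) 1 = Set.Ioc 0 v ∪ Set.Ioc v 1 from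
      (Set.Ioc_union_Ioc_eq_Ioc hv0.le hv1).symm,
    lintegral_union measurableSet_Ioc (Set.Ioc_disjoint_Ioc_of_le le_rfl)]
  -- rewrite the integrands
  have e1 : (∫⁻ u in Set.Ioc (0:ℝ) v,
      ENNReal.ofReal (u ^ α / ((min u v) ^ γ * (max u v) ^ (1-γ))))
      = ∫⁻ u in Set.Ioc (0:ℝ) v, ENNReal.ofReal (u ^ (α - γ) * v ^ (γ - 1)) := by
    apply setLIntegral_congr_fun measurableSet_Ioc
    refine fun u hu => ?_; beta_reduce
    rw [min_eq_left hu.2, max_eq_right hu.2]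
    congr 1
    rw [Real.rpow_sub hu.1, show (γ:ℝ) - 1 = -(1-γ) by ring, Real.rpow_neg hv0.le]
    have h1 : u ^ γ ≠ 0 := (Real.rpow_pos_of_pos hu.1 γ).ne'
    have h2 : v ^ (1-γ) ≠ 0 := (Real.rpow_pos_of_pos hv0 (1-γ)).ne'
    field_simp
  have e2 : (∫⁻ u in Set.Ioc v 1,
      ENNReal.ofReal (u ^ α / ((min u v) ^ γ * (max u v) ^ (1-γ))))
      = ∫⁻ u in Set.Ioc v 1, ENNReal.ofReal (u ^ (α + γ - 1) * v ^ (-γ)) := by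
    apply setLIntegral_congr_fun measurableSet_Ioc
    refine fun u hu => ?_; beta_reduce
    have hu0 : 0 < u := hv0.trans hu.1
    rw [min_eq_right hu.1.le, max_eq_left hu.1.le]
    congr 1
    have hrw : u ^ (α + γ - 1) = u ^ α / u ^ (1-γ) := by
      rw [← Real.rpow_sub hu0]; ring_nf
    rw [hrw, Real.rpow_neg hv0.le]
    have h1 : u ^ (1-γ) ≠ 0 := (Real.rpow_pos_of_pos hu0 (1-γ)).ne'
    have h2 : v ^ γ ≠ 0 := (Real.rpow_pos_of_pos hv0 γ).ne'
    field_simp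
  rw [e1, e2]
  -- compute first integral
  have int1 : IntegrableOn (fun u : ℝ => u ^ (α - γ) * v ^ (γ - 1)) (Set.Ioc 0 v) := by
    exact Integrable.mul_const
      ((intervalIntegrable_iff_integrableOn_Ioc_of_le hv0.le).mp
        (intervalIntegral.intervalIntegrable_rpow' (by linarith))) _
  have v1 : (∫⁻ u in Set.Ioc (0:ℝ) v, ENNReal.ofReal (u ^ (α - γ) * v ^ (γ - 1)))
      = ENNReal.ofReal (v ^ (α - γ + 1) / (α - γ + 1) * v ^ (γ - 1)) := by
    rw [← MeasureTheory.ofReal_integral_eq_lintegral_ofReal int1]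
    · congr 1
      rw [← intervalIntegral.integral_of_le hv0.le, intervalIntegral.integral_mul_const,
        integral_rpow (Or.inl (by linarith))]
      rw [Real.zero_rpow (by linarith)]
      ring_nf
    · refine (ae_restrict_iff' measurableSet_Ioc).mpr (Filter.Eventually.of_forall fun u hu => ?_)
      exact mul_nonneg (Real.rpow_nonneg hu.1.le _) (Real.rpow_nonneg hv0.le _)
  -- compute second integral
  have int2 : IntegrableOn (fun u : ℝ => u ^ (α + γ - 1) * v ^ (-γ)) (Set.Ioc v 1) := by
    exact Integrable.mul_const
      ((intervalIntegrable_iff_integrableOn_Ioc_of_le hv1).mp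
        (intervalIntegral.intervalIntegrable_rpow (Or.inr (fun h =>
      (lt_irrefl (0:ℝ) (lt_of_lt_of_le hv0 (by
        rcases Set.mem_uIcc.mp h with h' | h' <;> linarith [h'.1]))).elim)))) _
  have v2 : (∫⁻ u in Set.Ioc v 1, ENNReal.ofReal (u ^ (α + γ - 1) * v ^ (-γ)))
      = ENNReal.ofReal ((1 - v ^ (α + γ)) / (α + γ) * v ^ (-γ)) := by
    rw [← MeasureTheory.ofReal_integral_eq_lintegral_ofReal int2]
    · congr 1
      rw [← intervalIntegral.integral_of_le hv1, intervalIntegral.integral_mul_const,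
        integral_rpow (Or.inr ⟨by linarith, fun h =>
          (lt_irrefl (0:ℝ) (lt_of_lt_of_le hv0 (by
            rcases Set.mem_uIcc.mp h with h' | h' <;> linarith [h'.1]))).elim⟩)]
      rw [show α + γ - 1 + 1 = α + γ by ring, Real.one_rpow]
    · refine (ae_restrict_iff' measurableSet_Ioc).mpr (Filter.Eventually.of_forall fun u hu => ?_)
      exact mul_nonneg (Real.rpow_nonneg (hv0.trans hu.1).le _) (Real.rpow_nonneg hv0.le _)
  rw [v1, v2]
  -- final real inequality
  have hvag : 1 ≤ v ^ (α + γ) :=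
    Real.one_le_rpow_of_pos_of_le_one_of_nonpos hv0 hv1 h2.le
  have hAnn : 0 ≤ v ^ (α - γ + 1) / (α - γ + 1) * v ^ (γ - 1) :=
    mul_nonneg (div_nonneg (Real.rpow_nonneg hv0.le _) h1.le) (Real.rpow_nonneg hv0.le _)
  have hBnn : 0 ≤ (1 - v ^ (α + γ)) / (α + γ) * v ^ (-γ) :=
    mul_nonneg (by rw [div_nonneg_iff]; right; constructor <;> linarith) hvy.le
  rw [← ENNReal.ofReal_add hAnn hBnn]
  apply ENNReal.ofReal_le_ofReal
  have key1 : v ^ (α - γ + 1) * v ^ (γ - 1) = v ^ α := by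
    rw [← Real.rpow_add hv0]; ring_nf
  have key2 : v ^ (α + γ) * v ^ (-γ) = v ^ α := by
    rw [← Real.rpow_add hv0]; ring_nf
  have e3 : v ^ (α - γ + 1) / (α - γ + 1) * v ^ (γ - 1) = v ^ α / (α - γ + 1) := by
    rw [div_mul_eq_mul_div, key1]
  have e4 : (1 - v ^ (α + γ)) / (α + γ) * v ^ (-γ)
      = (v ^ (-γ) - v ^ α) / (α + γ) := by
    rw [div_mul_eq_mul_div, sub_mul, one_mul, key2]
  rw [e3, e4]
  rw [sub_mul, inv_mul_eq_div, inv_mul_eq_div]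
  have h5 : v ^ (-γ) / (α + γ) ≤ 0 := div_nonpos_of_nonneg_of_nonpos hvy.le h2.le
  have h6 : v ^ α / (α - γ + 1) = v ^ α / (1 + α - γ) := by ring_nf
  rw [sub_div, h6]
  linarith
end

section
/- For every γ ∈ (0, 1) there exists a finite constant C''' > 0 such that for every integer n ≥ 1, the iterated integral ∫₀¹ dt₀ ∫₀¹ dt₁ ⋯ ∫₀¹ dtₙ ∏_{k=1}^n ( 𝟙{t_k < t_{k-1}} / (t_{k-1}^{1-γ} t_k^γ) + 𝟙{t_k > t_{k-1}} / t_k ) is at most C'''^n. -/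
open MeasureTheory Set


lemma key_aux (K : ℝ → ℝ → ENNReal) (hK : Measurable fun p : ℝ × ℝ => K p.1 p.2)
    (h : ℝ → ENNReal) (hh : Measurable h) (C : ENNReal)
    (hker : ∀ s ∈ Set.Ioc (0:ℝ) 1, (∫⁻ x in Set.Ioc (0:ℝ) 1, K s x * h x) ≤ C * h s) :
    ∀ n : ℕ, (∫⁻ t in Set.univ.pi (fun _ : Fin (n+1) => Set.Ioc (0:ℝ) 1),
        (∏ k : Fin n, K (t k.castSucc) (t k.succ)) * h (t (Fin.last n)))
      ≤ C ^ n * ∫⁻ x in Set.Ioc (0:ℝ) 1, h x := by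
  intro n
  induction n with
  | zero =>
    simp only [Fin.prod_univ_zero, one_mul, pow_zero]
    have hpre : Set.univ.pi (fun _ : Fin 1 => Set.Ioc (0:ℝ) 1)
        = (MeasurableEquiv.funUnique (Fin 1) ℝ) ⁻¹' (Set.Ioc (0:ℝ) 1) := by
      ext t
      simp [MeasurableEquiv.funUnique, Set.mem_pi, Unique.forall_iff]
    rw [hpre]
    exact le_of_eq ((volume_preserving_funUnique (Fin 1) ℝ).setLIntegral_comp_preimage_emb
      (MeasurableEquiv.funUnique (Fin 1) ℝ).measurableEmbedding h (Set.Ioc 0 1))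
  | succ n ih =>
    have hproj : ∀ i : Fin (n+1), Measurable fun s : Fin (n+1) → ℝ => s i :=
      fun i => measurable_pi_apply i
    set e := MeasurableEquiv.piFinSuccAbove (fun _ : Fin (n+2) => ℝ) (Fin.last (n+1)) with he
    have heapp : ∀ t : Fin (n+2) → ℝ,
        e t = (t (Fin.last (n+1)), fun j : Fin (n+1) => t j.castSucc) := by
      intro t
      refine Prod.ext rfl ?_
      funext j
      simp [he, MeasurableEquiv.piFinSuccAbove, Fin.insertNthEquiv, Fin.removeNth,
        Fin.succAbove_last, Fin.init]
    set Spi := Set.univ.pi (fun _ : Fin (n+1) => Set.Ioc (0:ℝ) 1) with hSpi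
    have hSpim : MeasurableSet Spi := MeasurableSet.univ_pi fun _ => measurableSet_Ioc
    set A : (Fin (n+1) → ℝ) → ENNReal := fun s => ∏ k : Fin n, K (s k.castSucc) (s k.succ)
      with hA
    have hAm : Measurable A := by
      refine Finset.measurable_prod _ fun k _ => ?_
      exact hK.comp ((hproj k.castSucc).prodMk (hproj k.succ))
    set G : ℝ × (Fin (n+1) → ℝ) → ENNReal := fun p =>
      A p.2 * (K (p.2 (Fin.last n)) p.1 * h p.1) with hG
    have hGm : Measurable G := by
      refine (hAm.comp measurable_snd).mul (Measurable.mul ?_ (hh.comp measurable_fst))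
      exact hK.comp (((hproj (Fin.last n)).comp measurable_snd).prodMk measurable_fst)
    have hpre : Set.univ.pi (fun _ : Fin (n+2) => Set.Ioc (0:ℝ) 1)
        = e ⁻¹' ((Set.Ioc (0:ℝ) 1) ×ˢ Spi) := by
      ext t
      simp only [Set.mem_pi, Set.mem_univ, forall_true_left, Set.mem_preimage,
        heapp t, Set.mem_prod, hSpi]
      constructor
      · intro H
        exact ⟨H _, fun j => H _⟩
      · rintro ⟨h1, h2⟩ i
        refine Fin.lastCases h1 (fun j => h2 j) i
    have hcomp : ∀ t : Fin (n+2) → ℝ,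
        (∏ k : Fin (n+1), K (t k.castSucc) (t k.succ)) * h (t (Fin.last (n+1))) = G (e t) := by
      intro t
      rw [heapp t]
      simp only [hG, hA]
      rw [Fin.prod_univ_castSucc]
      have hsc : ∀ k : Fin n, (k.castSucc).succ = (k.succ).castSucc := by
        intro k; exact Fin.ext rfl
      simp only [hsc, Fin.succ_last]
      ring
    have hmeasx : ∀ s : Fin (n+1) → ℝ, Measurable fun x => K (s (Fin.last n)) x * h x :=
      fun s => (hK.comp (measurable_const.prodMk measurable_id)).mul hh
    calc (∫⁻ t in Set.univ.pi (fun _ : Fin (n+2) => Set.Ioc (0:ℝ) 1),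
        (∏ k : Fin (n+1), K (t k.castSucc) (t k.succ)) * h (t (Fin.last (n+1))))
        = ∫⁻ t in e ⁻¹' ((Set.Ioc (0:ℝ) 1) ×ˢ Spi), G (e t) := by
          rw [hpre]; exact setLIntegral_congr_fun (e.measurableSet_preimage.mpr
            (measurableSet_Ioc.prod hSpim)) (fun t _ => hcomp t)
      _ = ∫⁻ p in (Set.Ioc (0:ℝ) 1) ×ˢ Spi, G p := by
          exact (measurePreserving_piFinSuccAbove (fun _ : Fin (n+2) => volume)
            (Fin.last (n+1))).setLIntegral_comp_preimage_emb e.measurableEmbedding G _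
      _ = ∫⁻ s in Spi, ∫⁻ x in Set.Ioc (0:ℝ) 1, G (x, s) := by
          rw [Measure.volume_eq_prod, ← Measure.prod_restrict]
          exact lintegral_prod_symm G hGm.aemeasurable
      _ ≤ ∫⁻ s in Spi, C * (A s * h (s (Fin.last n))) := by
          refine lintegral_mono_ae ((ae_restrict_iff' hSpim).mpr
            (Filter.Eventually.of_forall fun s hs => ?_))
          calc (∫⁻ x in Set.Ioc (0:ℝ) 1, G (x, s))
              = A s * ∫⁻ x in Set.Ioc (0:ℝ) 1, K (s (Fin.last n)) x * h x := by
                simp only [hG]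
                exact lintegral_const_mul _ (hmeasx s)
            _ ≤ A s * (C * h (s (Fin.last n))) :=
                mul_le_mul_right (hker _ (hs _ (Set.mem_univ _))) _
            _ = C * (A s * h (s (Fin.last n))) := by ring
      _ = C * ∫⁻ s in Spi, A s * h (s (Fin.last n)) :=
          lintegral_const_mul _ (hAm.mul (hh.comp (hproj (Fin.last n))))
      _ ≤ C * (C ^ n * ∫⁻ x in Set.Ioc (0:ℝ) 1, h x) := mul_le_mul_right ih _
      _ = C ^ (n+1) * ∫⁻ x in Set.Ioc (0:ℝ) 1, h x := by rw [pow_succ]; ring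

lemma lint_rpow_Ioo {s r : ℝ} (hs : 0 < s) (hr : -1 < r) :
    ∫⁻ x in Set.Ioo 0 s, ENNReal.ofReal (x ^ r) = ENNReal.ofReal (s ^ (r+1) / (r+1)) := by
  have hint : IntegrableOn (fun x : ℝ => x ^ r) (Set.Ioo 0 s) := by
    have := intervalIntegral.intervalIntegrable_rpow' (a := 0) (b := s) hr
    rwa [intervalIntegrable_iff_integrableOn_Ioo_of_le hs.le] at this
  rw [← ofReal_integral_eq_lintegral_ofReal hint ?_]
  · congr 1
    have h1 : ∫ x in Set.Ioo 0 s, x ^ r = ∫ x in (0:ℝ)..s, x ^ r := by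
      rw [intervalIntegral.integral_of_le hs.le, integral_Ioc_eq_integral_Ioo]
    rw [h1, integral_rpow (Or.inl hr), Real.zero_rpow (by linarith)]
    ring
  · filter_upwards [ae_restrict_mem measurableSet_Ioo] with x hx
    exact Real.rpow_nonneg hx.1.le _

lemma lint_rpow_Ioc1 {s r : ℝ} (hs : 0 < s) (hs1 : s ≤ 1) (hr : r ≠ -1) :
    ∫⁻ x in Set.Ioc s 1, ENNReal.ofReal (x ^ r) = ENNReal.ofReal ((1 - s ^ (r+1)) / (r+1)) := by
  have h0 : (0:ℝ) ∉ Set.uIcc s 1 := Set.notMem_uIcc_of_lt hs one_pos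
  have hint : IntegrableOn (fun x : ℝ => x ^ r) (Set.Ioc s 1) := by
    have := intervalIntegral.intervalIntegrable_rpow (μ := volume) (a := s) (b := 1) (r := r) (Or.inr h0)
    rwa [intervalIntegrable_iff_integrableOn_Ioc_of_le hs1] at this
  rw [← ofReal_integral_eq_lintegral_ofReal hint ?_]
  · congr 1
    have h1 : ∫ x in Set.Ioc s 1, x ^ r = ∫ x in s..(1:ℝ), x ^ r := by
      rw [intervalIntegral.integral_of_le hs1]
    rw [h1, integral_rpow (Or.inr ⟨hr, h0⟩), Real.one_rpow]
  · filter_upwards [ae_restrict_mem measurableSet_Ioc] with x hx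
    exact Real.rpow_nonneg (le_trans hs.le hx.1.le) _

lemma ker_bound (γ α : ℝ) (hγ0 : 0 < γ) (hγ1 : γ < 1) (hα : α = (1-γ)/2) :
    ∀ s ∈ Set.Ioc (0:ℝ) 1,
      (∫⁻ x in Set.Ioc (0:ℝ) 1,
        (ENNReal.ofReal ((if x < s then 1/(s^(1-γ) * x^γ) else 0) +
          (if s < x then 1/x else 0))) * ENNReal.ofReal (x ^ (-α)))
      ≤ ENNReal.ofReal (2/α) * ENNReal.ofReal (s ^ (-α)) := by
  have hα0 : 0 < α := by rw [hα]; linarith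
  have hα1 : α < 1 := by rw [hα]; linarith
  rintro s ⟨hs0, hs1⟩
  rw [← Set.Ioc_union_Ioc_eq_Ioc hs0.le hs1,
    lintegral_union measurableSet_Ioc (Set.Ioc_disjoint_Ioc_of_le le_rfl)]
  have piece1 : (∫⁻ x in Set.Ioc (0:ℝ) s,
      (ENNReal.ofReal ((if x < s then 1/(s^(1-γ) * x^γ) else 0) +
        (if s < x then 1/x else 0))) * ENNReal.ofReal (x ^ (-α)))
      ≤ ENNReal.ofReal (s ^ (-α) / α) := by
    rw [← setLIntegral_congr (Ioo_ae_eq_Ioc (a := (0:ℝ)) (b := s))]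
    have hcong : ∀ x ∈ Set.Ioo (0:ℝ) s,
        (ENNReal.ofReal ((if x < s then 1/(s^(1-γ) * x^γ) else 0) +
          (if s < x then 1/x else 0))) * ENNReal.ofReal (x ^ (-α))
        = ENNReal.ofReal (s ^ (γ-1)) * ENNReal.ofReal (x ^ (-(γ+α))) := by
      intro x hx
      rw [if_pos hx.2, if_neg (asymm hx.2), add_zero,
        ← ENNReal.ofReal_mul
          (one_div_nonneg.mpr (mul_nonneg (Real.rpow_nonneg hs0.le _) (Real.rpow_nonneg hx.1.le _))),
        ← ENNReal.ofReal_mul (Real.rpow_nonneg hs0.le _)]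
      congr 1
      rw [show γ-1 = -(1-γ) by ring, Real.rpow_neg hs0.le, Real.rpow_neg hx.1.le,
        Real.rpow_neg hx.1.le, Real.rpow_add hx.1]
      field_simp
    rw [setLIntegral_congr_fun measurableSet_Ioo hcong,
      lintegral_const_mul _ (by fun_prop : Measurable fun x : ℝ => ENNReal.ofReal (x ^ (-(γ+α)))),
      lint_rpow_Ioo hs0 (by rw [hα]; linarith)]
    rw [show -(γ+α) + 1 = α by rw [hα]; ring, ← ENNReal.ofReal_mul (by positivity)]
    apply ENNReal.ofReal_le_ofReal
    rw [← mul_div_assoc, ← Real.rpow_add hs0, show γ - 1 + α = -α by rw [hα]; ring]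
  have piece2 : (∫⁻ x in Set.Ioc s 1,
      (ENNReal.ofReal ((if x < s then 1/(s^(1-γ) * x^γ) else 0) +
        (if s < x then 1/x else 0))) * ENNReal.ofReal (x ^ (-α)))
      ≤ ENNReal.ofReal (s ^ (-α) / α) := by
    have hcong : ∀ x ∈ Set.Ioc s (1:ℝ),
        (ENNReal.ofReal ((if x < s then 1/(s^(1-γ) * x^γ) else 0) +
          (if s < x then 1/x else 0))) * ENNReal.ofReal (x ^ (-α))
        = ENNReal.ofReal (x ^ (-(1+α))) := by
      intro x hx
      have hx0 : (0:ℝ) < x := lt_trans hs0 hx.1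
      rw [if_pos hx.1, if_neg (asymm hx.1), zero_add, ← ENNReal.ofReal_mul (by positivity)]
      congr 1
      rw [show -(1+α) = -1 + -α by ring, Real.rpow_add hx0, Real.rpow_neg_one, one_div]
    rw [setLIntegral_congr_fun measurableSet_Ioc hcong,
      lint_rpow_Ioc1 hs0 hs1 (by intro hc; rw [show (-1:ℝ) = -1 + 0 by ring] at hc; nlinarith),
      show -(1+α) + 1 = -α by ring]
    apply ENNReal.ofReal_le_ofReal
    rw [show (1 - s^(-α)) / (-α) = (s^(-α) - 1) / α by ring]
    gcongr
    linarith
  calc _ ≤ ENNReal.ofReal (s ^ (-α) / α) + ENNReal.ofReal (s ^ (-α) / α) :=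
        add_le_add piece1 piece2
    _ = ENNReal.ofReal (2/α) * ENNReal.ofReal (s ^ (-α)) := by
        rw [← ENNReal.ofReal_add (by positivity) (by positivity),
          ← ENNReal.ofReal_mul (by positivity)]
        congr 1
        ring
/-- Lemma 6.5: time integral bound for traces of quick paths. -/

theorem stmt_2 (γ : ℝ) (hγ0 : 0 < γ) (hγ1 : γ < 1) :
    ∃ C''' : ℝ, 0 < C''' ∧ ∀ n : ℕ, 1 ≤ n →
      (∫⁻ t in Set.univ.pi (fun _ : Fin (n+1) => Set.Ioc (0:ℝ) 1),
        ∏ k : Fin n, ENNReal.ofReal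
          ((if t k.succ < t k.castSucc then
              1 / ((t k.castSucc) ^ (1-γ) * (t k.succ) ^ γ) else 0) +
           (if t k.castSucc < t k.succ then 1 / (t k.succ) else 0))) ≤
      ENNReal.ofReal (C''' ^ n) := by
  set α : ℝ := (1-γ)/2 with hαdef
  have hα0 : 0 < α := by rw [hαdef]; linarith
  have hα1 : α < 1 := by rw [hαdef]; linarith
  refine ⟨(2/α) * (1/(1-α)), mul_pos (div_pos two_pos hα0) (div_pos one_pos (by linarith)), fun n hn => ?_⟩
  set K : ℝ → ℝ → ENNReal := fun s x => ENNReal.ofReal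
    ((if x < s then 1/(s^(1-γ) * x^γ) else 0) + (if s < x then 1/x else 0)) with hKdef
  set h : ℝ → ENNReal := fun x => ENNReal.ofReal (x ^ (-α)) with hhdef
  have hK : Measurable fun p : ℝ × ℝ => K p.1 p.2 := by
    apply Measurable.ennreal_ofReal
    apply Measurable.add
    · exact Measurable.ite (measurableSet_lt measurable_snd measurable_fst)
        (measurable_const.div ((measurable_fst.pow measurable_const).mul
          (measurable_snd.pow measurable_const))) measurable_const
    · exact Measurable.ite (measurableSet_lt measurable_fst measurable_snd)
        (measurable_const.div measurable_snd) measurable_const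
  have hh : Measurable h := by
    exact (measurable_id.pow measurable_const).ennreal_ofReal
  have hSpim : MeasurableSet (Set.univ.pi (fun _ : Fin (n+1) => Set.Ioc (0:ℝ) 1)) :=
    MeasurableSet.univ_pi fun _ => measurableSet_Ioc
  have hstep : (∫⁻ t in Set.univ.pi (fun _ : Fin (n+1) => Set.Ioc (0:ℝ) 1),
        ∏ k : Fin n, ENNReal.ofReal
          ((if t k.succ < t k.castSucc then
              1 / ((t k.castSucc) ^ (1-γ) * (t k.succ) ^ γ) else 0) +
           (if t k.castSucc < t k.succ then 1 / (t k.succ) else 0)))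
      ≤ ∫⁻ t in Set.univ.pi (fun _ : Fin (n+1) => Set.Ioc (0:ℝ) 1),
          (∏ k : Fin n, K (t k.castSucc) (t k.succ)) * h (t (Fin.last n)) := by
    refine lintegral_mono_ae ((ae_restrict_iff' hSpim).mpr
      (Filter.Eventually.of_forall fun t ht => ?_))
    have h1 : (1:ENNReal) ≤ h (t (Fin.last n)) := by
      rw [hhdef]
      refine ENNReal.one_le_ofReal.mpr ?_
      have htl := ht (Fin.last n) (Set.mem_univ _)
      exact Real.one_le_rpow_of_pos_of_le_one_of_nonpos htl.1 htl.2 (by linarith)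
    exact le_mul_of_one_le_right zero_le h1
  have hker := ker_bound γ α hγ0 hγ1 hαdef
  have hmain := key_aux K hK h hh (ENNReal.ofReal (2/α)) hker n
  have hInt : (∫⁻ x in Set.Ioc (0:ℝ) 1, h x) = ENNReal.ofReal (1/(1-α)) := by
    rw [hhdef, ← setLIntegral_congr (Ioo_ae_eq_Ioc (a := (0:ℝ)) (b := 1)),
      lint_rpow_Ioo one_pos (by linarith), Real.one_rpow]
    rw [show -α + 1 = 1 - α by ring]
  refine le_trans (le_trans hstep hmain) ?_
  rw [hInt, ← ENNReal.ofReal_pow (by positivity), ← ENNReal.ofReal_mul (by positivity)]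
  apply ENNReal.ofReal_le_ofReal
  rw [mul_pow]
  have h2 : (1/(1-α)) ≤ (1/(1-α))^n := by
    refine le_self_pow₀ ?_ (by omega)
    rw [le_div_iff₀ (by linarith)]
    linarith
  calc (2/α)^n * (1/(1-α)) ≤ (2/α)^n * (1/(1-α))^n :=
        mul_le_mul_of_nonneg_left h2 (by positivity)
    _ = _ := rfl
end

section
/- Let γ > 0 and let (X_r)_{r > 1} be a family of almost surely positive random variables such that log X_r / (γ log r) converges to 1 in probability as r → ∞. Then there exists a function g : (0,∞) → (0,∞) with g(r)/r^l → 0 as r → ∞ for every l > 0, such that P(X_r ≤ r^γ / g(r)) → 0 as r → ∞. -/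
open MeasureTheory Filter

/-- Abstract content of Lemma 7.4. -/
theorem stmt_12 {Ω : Type*} [MeasurableSpace Ω] (μ : Measure Ω) [IsProbabilityMeasure μ]
    (γ : ℝ) (hγ : 0 < γ) (X : ℝ → Ω → ℝ) (hXmeas : ∀ r, Measurable (X r))
    (hXpos : ∀ r, 1 < r → ∀ᵐ ω ∂μ, 0 < X r ω)
    (hconv : ∀ ε : ℝ, 0 < ε →
      Tendsto (fun r => μ {ω | ε < |Real.log (X r ω) / (γ * Real.log r) - 1|})
        atTop (nhds 0)) :
    ∃ g : ℝ → ℝ, (∀ r, 0 < r → 0 < g r) ∧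
      (∀ l : ℝ, 0 < l → Tendsto (fun r => g r / r ^ l) atTop (nhds (0:ℝ))) ∧
      Tendsto (fun r => μ {ω | X r ω ≤ r ^ γ / g r}) atTop (nhds 0) := by
  classical
  -- Step 1: choose thresholds R n such that for r ≥ R n the deviation probability at
  -- level 1/(2(n+1)) is at most 1/(n+1).
  have h : ∀ n : ℕ, ∃ R : ℝ, ∀ r : ℝ, R ≤ r →
      μ {ω | 1 / (2 * ((n : ℝ) + 1)) < |Real.log (X r ω) / (γ * Real.log r) - 1|}
        ≤ (((n : ENNReal)) + 1)⁻¹ := by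
    intro n
    have hε : (0:ℝ) < 1 / (2 * ((n : ℝ) + 1)) := by positivity
    have h0 : (0:ENNReal) < ((n : ENNReal) + 1)⁻¹ := by
      simp [ENNReal.inv_pos]
    have hev := (hconv _ hε).eventually (eventually_le_nhds h0)
    exact eventually_atTop.mp hev
  choose R hR using h
  -- Step 2: a "staircase" T with T n ≥ n and T n ≥ R n.
  set T : ℕ → ℝ := fun n => n + ∑ k ∈ Finset.range (n+1), max (R k) 0 with hTdef
  have hTn : ∀ n : ℕ, (n : ℝ) ≤ T n := fun n =>
    le_add_of_nonneg_right (Finset.sum_nonneg fun k _ => le_max_right _ _)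
  have hTR : ∀ n : ℕ, R n ≤ T n := by
    intro n
    calc R n ≤ max (R n) 0 := le_max_left _ _
      _ ≤ ∑ k ∈ Finset.range (n+1), max (R k) 0 :=
        Finset.single_le_sum (f := fun k => max (R k) 0) (fun k _ => le_max_right _ _) (Finset.self_mem_range_succ n)
      _ ≤ T n := le_add_of_nonneg_left (n.cast_nonneg)
  -- Step 3: the index function N.
  set N : ℝ → ℕ := fun r => Nat.findGreatest (fun n => T n ≤ r) ⌊r⌋₊ with hNdef
  have hNge : ∀ n : ℕ, ∀ r : ℝ, T n ≤ r → n ≤ N r := by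
    intro n r hr
    exact Nat.le_findGreatest (Nat.le_floor ((hTn n).trans hr)) hr
  have hNspec : ∀ r : ℝ, T 0 ≤ r → T (N r) ≤ r := by
    intro r hr
    exact Nat.findGreatest_spec (P := fun n => T n ≤ r) (Nat.zero_le _) hr
  have hNtop : Tendsto N atTop atTop :=
    Filter.tendsto_atTop.mpr fun b => eventually_atTop.mpr ⟨T b, fun r hr => hNge b r hr⟩
  -- The function g.
  refine ⟨fun r => r ^ (γ * (1 / ((N r : ℝ) + 1))), ?_, ?_, ?_⟩
  · intro r hr
    exact Real.rpow_pos_of_pos hr _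
  · -- g r / r ^ l → 0
    intro l hl
    obtain ⟨n₀, hn₀⟩ := exists_nat_gt (2 * γ / l)
    have hexp : ∀ r : ℝ, T n₀ ≤ r → γ * (1 / ((N r : ℝ) + 1)) ≤ l / 2 := by
      intro r hr
      have h1 : (n₀ : ℝ) ≤ (N r : ℝ) := by exact_mod_cast hNge n₀ r hr
      have h2 : (0:ℝ) < (N r : ℝ) + 1 := by positivity
      have h3 : 2 * γ / l < (N r : ℝ) + 1 := by linarith
      have h4 : 2 * γ < l * ((N r : ℝ) + 1) := by
        rw [div_lt_iff₀ hl] at h3; linarith [mul_comm ((N r : ℝ) + 1) l]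
      rw [mul_one_div, div_le_div_iff₀ h2 (by norm_num : (0:ℝ) < 2)]
      linarith
    apply squeeze_zero' (g := fun r : ℝ => r ^ (-(l/2)))
    · filter_upwards [eventually_ge_atTop (1:ℝ)] with r hr
      have hr0 : (0:ℝ) < r := by linarith
      positivity
    · filter_upwards [eventually_ge_atTop (1:ℝ), eventually_ge_atTop (T n₀)] with r hr1 hrT
      have hr0 : (0:ℝ) < r := by linarith
      rw [← Real.rpow_sub hr0]
      apply Real.rpow_le_rpow_of_exponent_le hr1
      have := hexp r hrT
      linarith
    · exact tendsto_rpow_neg_atTop (by positivity)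
  · -- the probability tends to 0
    have hbound : ∀ᶠ r : ℝ in atTop,
        μ {ω | X r ω ≤ r ^ γ / r ^ (γ * (1 / ((N r : ℝ) + 1)))}
          ≤ ((N r : ENNReal) + 1)⁻¹ := by
      filter_upwards [eventually_ge_atTop (T 0), eventually_ge_atTop (2:ℝ)] with r hrT hr2
      have hr1 : (1:ℝ) < r := by linarith
      have hr0 : (0:ℝ) < r := by linarith
      set n := N r with hn
      set δ : ℝ := 1 / ((n : ℝ) + 1) with hδ
      have hδpos : 0 < δ := by positivity
      have hlr : 0 < Real.log r := Real.log_pos hr1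
      have hγlr : 0 < γ * Real.log r := mul_pos hγ hlr
      have hincl : {ω | X r ω ≤ r ^ γ / r ^ (γ * δ)} ⊆
          {ω | 1 / (2 * ((n : ℝ) + 1)) < |Real.log (X r ω) / (γ * Real.log r) - 1|}
            ∪ {ω | ¬ 0 < X r ω} := by
        intro ω hω
        by_cases hpos : 0 < X r ω
        · left
          simp only [Set.mem_setOf_eq] at hω ⊢
          have hXle : X r ω ≤ r ^ (γ - γ * δ) := by
            rw [Real.rpow_sub hr0]; exact hω
          have hlog : Real.log (X r ω) ≤ (γ - γ * δ) * Real.log r := by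
            calc Real.log (X r ω) ≤ Real.log (r ^ (γ - γ * δ)) :=
                  Real.log_le_log (by exact hpos) hXle
              _ = (γ - γ * δ) * Real.log r := Real.log_rpow hr0 _
          have hdiv : Real.log (X r ω) / (γ * Real.log r) ≤ 1 - δ := by
            rw [div_le_iff₀ hγlr]
            have key : (1 - δ) * (γ * Real.log r) = (γ - γ * δ) * Real.log r := by ring
            linarith
          have habs : δ ≤ |Real.log (X r ω) / (γ * Real.log r) - 1| := by
            have h1 := neg_le_abs (Real.log (X r ω) / (γ * Real.log r) - 1)
            linarith
          have hhalf : 1 / (2 * ((n : ℝ) + 1)) = δ / 2 := by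
            rw [hδ, div_div, mul_comm]
          rw [hhalf]
          linarith
        · right; exact hpos
      calc μ {ω | X r ω ≤ r ^ γ / r ^ (γ * (1 / ((N r : ℝ) + 1)))}
          ≤ μ ({ω | 1 / (2 * ((n : ℝ) + 1)) < |Real.log (X r ω) / (γ * Real.log r) - 1|}
              ∪ {ω | ¬ 0 < X r ω}) := measure_mono hincl
        _ ≤ μ {ω | 1 / (2 * ((n : ℝ) + 1)) < |Real.log (X r ω) / (γ * Real.log r) - 1|}
              + μ {ω | ¬ 0 < X r ω} := measure_union_le _ _
        _ = μ {ω | 1 / (2 * ((n : ℝ) + 1)) < |Real.log (X r ω) / (γ * Real.log r) - 1|} := by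
            rw [ae_iff.mp (hXpos r hr1), add_zero]
        _ ≤ ((n : ENNReal) + 1)⁻¹ := hR n r ((hTR n).trans (hNspec r hrT))
    have hinv : Tendsto (fun r : ℝ => ((N r : ENNReal) + 1)⁻¹) atTop (nhds 0) := by
      have h1 : Tendsto (fun m : ℕ => ((m : ENNReal) + 1)⁻¹) atTop (nhds 0) := by
        exact (ENNReal.tendsto_inv_nat_nhds_zero.comp (tendsto_add_atTop_nat 1)).congr
          (fun m => by norm_cast)
      exact h1.comp hNtop
    exact tendsto_of_tendsto_of_tendsto_of_le_of_le' tendsto_const_nhds hinv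
      (Eventually.of_forall fun r => zero_le) hbound
end
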